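/- Tsirelson's bound: for any density operator ρ on H_A ⊗ H_B and Hermitian operators A₀, A₁ on H_A and B₀, B₁ on H_B with operator norms ≤ 1 (i.e. −1 ≤ Aᵢ ≤ 1, −1 ≤ Bⱼ ≤ 1), the quantity |Tr[ρ(A₀⊗B₀ + A₀⊗B₁ − A₁⊗B₀ + A₁⊗B₁)]| is at most 2√2. -/

import Mathlib

open scoped Kronecker ComplexOrder
open Matrix

section TsirelsonAux

variable {m n : ℕ}

private lemma tsi_kron_conjTranspose (X : Matrix (Fin m) (Fin m) ℂ)
    (Y : Matrix (Fin n) (Fin n) ℂ) : (X ⊗ₖ Y)ᴴ = Xᴴ ⊗ₖ Yᴴ := by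
  ext ⟨i₁, i₂⟩ ⟨j₁, j₂⟩
  simp [conjTranspose_apply, kronecker_apply, mul_comm]

private lemma tsi_psd_smul {k : Type*} [Fintype k] [DecidableEq k] {M : Matrix k k ℂ} (hM : M.PosSemidef) {c : ℝ}
    (hc : 0 ≤ c) : ((c : ℂ) • M).PosSemidef := by
  refine posSemidef_iff_dotProduct_mulVec.mpr ⟨?_, ?_⟩
  · show ((c : ℂ) • M)ᴴ = (c : ℂ) • M
    rw [conjTranspose_smul, hM.1.eq, Complex.star_def, Complex.conj_ofReal]
  · intro x
    rw [smul_mulVec, dotProduct_smul]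
    exact mul_nonneg (by exact_mod_cast hc) (hM.dotProduct_mulVec_nonneg x)

private lemma tsi_psd_kron {X : Matrix (Fin m) (Fin m) ℂ} {Y : Matrix (Fin n) (Fin n) ℂ}
    (hX : X.PosSemidef) (hY : Y.PosSemidef) : (X ⊗ₖ Y).PosSemidef := by
  exact hX.kronecker hY

private lemma tsi_psd_one_sub_sq {k : Type*} [Fintype k] [DecidableEq k] {A : Matrix k k ℂ}
    (hub : ((1 : Matrix k k ℂ) - A).PosSemidef)
    (hlb : ((1 : Matrix k k ℂ) + A).PosSemidef) :
    ((1 : Matrix k k ℂ) - A * A).PosSemidef := by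
  have hA : Aᴴ = A := by
    have h2 := hlb.1.eq
    rw [conjTranspose_add, conjTranspose_one] at h2
    exact add_left_cancel h2
  have hU : ((1 : Matrix k k ℂ) - A)ᴴ = 1 - A := by
    rw [conjTranspose_sub, conjTranspose_one, hA]
  have hV : ((1 : Matrix k k ℂ) + A)ᴴ = 1 + A := by
    rw [conjTranspose_add, conjTranspose_one, hA]
  have key : (1 - A * A) + (1 - A * A)
      = (1 - A) * (1 + A) * (1 - A)ᴴ + (1 + A) * (1 - A) * (1 + A)ᴴ := by
    rw [hU, hV]; noncomm_ring
  have hpsd : ((1 - A * A) + (1 - A * A) : Matrix k k ℂ).PosSemidef := by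
    rw [key]
    exact (hlb.mul_mul_conjTranspose_same _).add (hub.mul_mul_conjTranspose_same _)
  have h2 : ((1 : Matrix k k ℂ) - A * A)
      = ((1/2 : ℝ) : ℂ) • ((1 - A * A) + (1 - A * A)) := by
    rw [smul_add]
    push_cast
    rw [← add_smul]
    norm_num
  rw [h2]
  exact tsi_psd_smul hpsd (by norm_num)

private lemma tsi_psd_trace_nonneg {k : Type*} [Fintype k] [DecidableEq k] {M : Matrix k k ℂ} (hM : M.PosSemidef) :
    0 ≤ M.trace := by
  rw [Matrix.trace]
  apply Finset.sum_nonneg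
  intro i _
  have := hM.dotProduct_mulVec_nonneg (Pi.single i 1)
  simpa [Matrix.diag, dotProduct, mulVec, Pi.single_apply, Finset.mul_sum] using this

private lemma tsi_psd_mul_trace_nonneg {k : Type*} [Fintype k] [DecidableEq k] {ρ M : Matrix k k ℂ}
    (hρ : ρ.PosSemidef) (hM : M.PosSemidef) : 0 ≤ (ρ * M).trace := by
  open scoped MatrixOrder in
  obtain ⟨a, rfl⟩ := CStarAlgebra.nonneg_iff_eq_star_mul_self.mp hρ.nonneg
  rw [star_eq_conjTranspose, Matrix.mul_assoc, Matrix.trace_mul_comm]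
  exact tsi_psd_trace_nonneg (hM.mul_mul_conjTranspose_same a)

private lemma tsi_kmul (X Y : Matrix (Fin m) (Fin m) ℂ) (Z W : Matrix (Fin n) (Fin n) ℂ) :
    (X ⊗ₖ Z) * (Y ⊗ₖ W) = (X * Y) ⊗ₖ (Z * W) :=
  (Matrix.mul_kronecker_mul X Y Z W).symm

private lemma tsi_sub_kron (X Y : Matrix (Fin m) (Fin m) ℂ) (Z : Matrix (Fin n) (Fin n) ℂ) :
    (X - Y) ⊗ₖ Z = X ⊗ₖ Z - Y ⊗ₖ Z := by
  ext ⟨i₁, i₂⟩ ⟨j₁, j₂⟩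
  simp [kronecker_apply, sub_mul]

private lemma tsi_kron_sub (X : Matrix (Fin m) (Fin m) ℂ) (Z W : Matrix (Fin n) (Fin n) ℂ) :
    X ⊗ₖ (Z - W) = X ⊗ₖ Z - X ⊗ₖ W := by
  ext ⟨i₁, i₂⟩ ⟨j₁, j₂⟩
  simp [kronecker_apply, mul_sub]

private lemma tsi_neg_kron (X : Matrix (Fin m) (Fin m) ℂ) (Z : Matrix (Fin n) (Fin n) ℂ) :
    (-X) ⊗ₖ Z = -(X ⊗ₖ Z) := by
  ext ⟨i₁, i₂⟩ ⟨j₁, j₂⟩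
  simp [kronecker_apply]

private lemma tsi_sos (c : ℂ) (hc : c * c = 1/2)
    (A0 A1 : Matrix (Fin m) (Fin m) ℂ) (B0 B1 : Matrix (Fin n) (Fin n) ℂ) :
    (4 * c) • (1 : Matrix (Fin m × Fin n) (Fin m × Fin n) ℂ)
        - (A0 ⊗ₖ B0 + A0 ⊗ₖ B1 - A1 ⊗ₖ B0 + A1 ⊗ₖ B1)
    = c • ((A0 ⊗ₖ (1 : Matrix (Fin n) (Fin n) ℂ) - c • ((1 : Matrix (Fin m) (Fin m) ℂ) ⊗ₖ (B0 + B1)))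
            * (A0 ⊗ₖ (1 : Matrix (Fin n) (Fin n) ℂ) - c • ((1 : Matrix (Fin m) (Fin m) ℂ) ⊗ₖ (B0 + B1)))
         + (A1 ⊗ₖ (1 : Matrix (Fin n) (Fin n) ℂ) - c • ((1 : Matrix (Fin m) (Fin m) ℂ) ⊗ₖ (B1 - B0)))
            * (A1 ⊗ₖ (1 : Matrix (Fin n) (Fin n) ℂ) - c • ((1 : Matrix (Fin m) (Fin m) ℂ) ⊗ₖ (B1 - B0))))
    + c • ((((1 : Matrix (Fin m) (Fin m) ℂ) - A0 * A0) + (1 - A1 * A1)) ⊗ₖ (1 : Matrix (Fin n) (Fin n) ℂ))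
    + c • ((1 : Matrix (Fin m) (Fin m) ℂ) ⊗ₖ (((1 : Matrix (Fin n) (Fin n) ℂ) - B0 * B0) + (1 - B1 * B1))) := by
  have h1 : (1 : Matrix (Fin m × Fin n) (Fin m × Fin n) ℂ)
      = (1 : Matrix (Fin m) (Fin m) ℂ) ⊗ₖ (1 : Matrix (Fin n) (Fin n) ℂ) :=
    (Matrix.one_kronecker_one).symm
  rw [h1]
  simp only [Matrix.kronecker_add, Matrix.add_kronecker, tsi_kron_sub,
    tsi_sub_kron, mul_add, add_mul, mul_sub, sub_mul,
    smul_mul_assoc, mul_smul_comm, smul_smul, smul_add, smul_sub,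
    tsi_kmul, Matrix.one_mul, Matrix.mul_one]
  match_scalars <;>
    first
      | ring1
      | linear_combination (norm := ring1) (2*c) * hc
      | linear_combination (norm := ring1) (-2*c) * hc
      | linear_combination (norm := ring1) 2 * hc
      | linear_combination (norm := ring1) (-2) * hc

private lemma tsi_key_psd (A0 A1 : Matrix (Fin m) (Fin m) ℂ) (B0 B1 : Matrix (Fin n) (Fin n) ℂ)
    (hA0 : A0.IsHermitian) (hA1 : A1.IsHermitian)
    (hB0 : B0.IsHermitian) (hB1 : B1.IsHermitian)
    (hA0s : ((1 : Matrix (Fin m) (Fin m) ℂ) - A0 * A0).PosSemidef)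
    (hA1s : ((1 : Matrix (Fin m) (Fin m) ℂ) - A1 * A1).PosSemidef)
    (hB0s : ((1 : Matrix (Fin n) (Fin n) ℂ) - B0 * B0).PosSemidef)
    (hB1s : ((1 : Matrix (Fin n) (Fin n) ℂ) - B1 * B1).PosSemidef) :
    (((2 * Real.sqrt 2 : ℝ) : ℂ) • (1 : Matrix (Fin m × Fin n) (Fin m × Fin n) ℂ)
      - (A0 ⊗ₖ B0 + A0 ⊗ₖ B1 - A1 ⊗ₖ B0 + A1 ⊗ₖ B1)).PosSemidef := by
  have hs2 : Real.sqrt 2 * Real.sqrt 2 = 2 := Real.mul_self_sqrt (by norm_num)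
  set r : ℝ := Real.sqrt 2 / 2 with hr
  have hr0 : 0 ≤ r := by positivity
  set c : ℂ := (r : ℂ) with hcdef
  have hc : c * c = 1/2 := by
    rw [hcdef, ← Complex.ofReal_mul, hr]
    rw [div_mul_div_comm, hs2]
    norm_num
  have h4 : ((2 * Real.sqrt 2 : ℝ) : ℂ) = 4 * c := by
    rw [hcdef, hr]
    push_cast
    ring
  rw [h4, tsi_sos c hc A0 A1 B0 B1]
  set P := A0 ⊗ₖ (1 : Matrix (Fin n) (Fin n) ℂ) - c • ((1 : Matrix (Fin m) (Fin m) ℂ) ⊗ₖ (B0 + B1)) with hPdef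
  set Q := A1 ⊗ₖ (1 : Matrix (Fin n) (Fin n) ℂ) - c • ((1 : Matrix (Fin m) (Fin m) ℂ) ⊗ₖ (B1 - B0)) with hQdef
  have hP : Pᴴ = P := by
    rw [hPdef, conjTranspose_sub, conjTranspose_smul, tsi_kron_conjTranspose,
      tsi_kron_conjTranspose, conjTranspose_one, conjTranspose_add,
      conjTranspose_one, hA0.eq, hB0.eq, hB1.eq, hcdef, Complex.star_def,
      Complex.conj_ofReal]
  have hQ : Qᴴ = Q := by
    rw [hQdef, conjTranspose_sub, conjTranspose_smul, tsi_kron_conjTranspose,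
      tsi_kron_conjTranspose, conjTranspose_one, conjTranspose_sub,
      conjTranspose_one, hA1.eq, hB0.eq, hB1.eq, hcdef, Complex.star_def,
      Complex.conj_ofReal]
  have hPP : (P * P).PosSemidef := by
    nth_rewrite 1 [← hP]
    exact posSemidef_conjTranspose_mul_self P
  have hQQ : (Q * Q).PosSemidef := by
    nth_rewrite 1 [← hQ]
    exact posSemidef_conjTranspose_mul_self Q
  refine PosSemidef.add (PosSemidef.add ?_ ?_) ?_
  · exact tsi_psd_smul (hPP.add hQQ) hr0
  · exact tsi_psd_smul (tsi_psd_kron (hA0s.add hA1s) Matrix.PosSemidef.one) hr0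
  · exact tsi_psd_smul (tsi_psd_kron Matrix.PosSemidef.one (hB0s.add hB1s)) hr0

end TsirelsonAux

theorem tsirelson_bound (m n : ℕ)
    (ρ : Matrix (Fin m × Fin n) (Fin m × Fin n) ℂ)
    (hρ : ρ.PosSemidef) (hρ1 : ρ.trace = 1)
    (A : Fin 2 → Matrix (Fin m) (Fin m) ℂ)
    (hAH : ∀ i, (A i).IsHermitian)
    (hAub : ∀ i, ((1 : Matrix (Fin m) (Fin m) ℂ) - A i).PosSemidef)
    (hAlb : ∀ i, ((1 : Matrix (Fin m) (Fin m) ℂ) + A i).PosSemidef)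
    (B : Fin 2 → Matrix (Fin n) (Fin n) ℂ)
    (hBH : ∀ j, (B j).IsHermitian)
    (hBub : ∀ j, ((1 : Matrix (Fin n) (Fin n) ℂ) - B j).PosSemidef)
    (hBlb : ∀ j, ((1 : Matrix (Fin n) (Fin n) ℂ) + B j).PosSemidef) :
    ‖(ρ * (A 0 ⊗ₖ B 0 + A 0 ⊗ₖ B 1 - A 1 ⊗ₖ B 0 + A 1 ⊗ₖ B 1)).trace‖
      ≤ 2 * Real.sqrt 2 := by
  set S := A 0 ⊗ₖ B 0 + A 0 ⊗ₖ B 1 - A 1 ⊗ₖ B 0 + A 1 ⊗ₖ B 1 with hS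
  set x : ℂ := ((2 * Real.sqrt 2 : ℝ) : ℂ) with hx
  have hAs : ∀ i, ((1 : Matrix (Fin m) (Fin m) ℂ) - A i * A i).PosSemidef :=
    fun i => tsi_psd_one_sub_sq (hAub i) (hAlb i)
  have hBs : ∀ j, ((1 : Matrix (Fin n) (Fin n) ℂ) - B j * B j).PosSemidef :=
    fun j => tsi_psd_one_sub_sq (hBub j) (hBlb j)
  have hplus : (x • (1 : Matrix (Fin m × Fin n) (Fin m × Fin n) ℂ) - S).PosSemidef :=
    tsi_key_psd (A 0) (A 1) (B 0) (B 1) (hAH 0) (hAH 1) (hBH 0) (hBH 1)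
      (hAs 0) (hAs 1) (hBs 0) (hBs 1)
  have hminus : (x • (1 : Matrix (Fin m × Fin n) (Fin m × Fin n) ℂ) + S).PosSemidef := by
    have h := tsi_key_psd (-(A 0)) (-(A 1)) (B 0) (B 1) ((hAH 0).neg) ((hAH 1).neg)
      (hBH 0) (hBH 1)
      (by rw [neg_mul_neg]; exact hAs 0) (by rw [neg_mul_neg]; exact hAs 1)
      (hBs 0) (hBs 1)
    have hrw : (-(A 0)) ⊗ₖ B 0 + (-(A 0)) ⊗ₖ B 1 - (-(A 1)) ⊗ₖ B 0 + (-(A 1)) ⊗ₖ B 1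
        = -S := by
      rw [hS]
      simp only [tsi_neg_kron]
      abel
    rw [hrw, sub_neg_eq_add] at h
    exact h
  have h1 : 0 ≤ (ρ * (x • (1 : Matrix (Fin m × Fin n) (Fin m × Fin n) ℂ) - S)).trace :=
    tsi_psd_mul_trace_nonneg hρ hplus
  have h2 : 0 ≤ (ρ * (x • (1 : Matrix (Fin m × Fin n) (Fin m × Fin n) ℂ) + S)).trace :=
    tsi_psd_mul_trace_nonneg hρ hminus
  set t : ℂ := (ρ * S).trace with ht
  have e1 : (ρ * (x • (1 : Matrix (Fin m × Fin n) (Fin m × Fin n) ℂ) - S)).trace = x - t := by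
    rw [mul_sub, mul_smul_comm, mul_one, trace_sub, trace_smul, hρ1]
    simp [ht]
  have e2 : (ρ * (x • (1 : Matrix (Fin m × Fin n) (Fin m × Fin n) ℂ) + S)).trace = x + t := by
    rw [mul_add, mul_smul_comm, mul_one, trace_add, trace_smul, hρ1]
    simp [ht]
  rw [e1] at h1
  rw [e2] at h2
  rw [Complex.le_def] at h1 h2
  have him : t.im = 0 := by
    have := h1.2
    simp [hx] at this
    simpa using this
  have hre1 : t.re ≤ 2 * Real.sqrt 2 := by
    have := h1.1
    simp [hx] at this
    linarith
  have hre2 : -(2 * Real.sqrt 2) ≤ t.re := by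
    have := h2.1
    simp [hx] at this
    linarith
  have htr : t = ((t.re : ℝ) : ℂ) := by
    exact Complex.ext rfl (by simp [him])
  rw [htr, Complex.norm_real, Real.norm_eq_abs]
  rw [abs_le]
  exact ⟨hre2, hre1⟩
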